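/- Suppose v̂ : [0,T] × (0,∞) → ℝ is continuously differentiable in t and twice continuously differentiable in Y, and satisfies the reduced HJB equation: for all (t,Y) ∈ [0,T] × (0,∞), ∂_t v̂(t,Y) + sup_{a ∈ ℝ, γ ≥ 0} [ e^{−b·t}·u(γ)·(1−F(t)) + ((a·μ + (1−a)·r)·Y − γ·(1−F(t))^C)·∂_Y v̂(t,Y) + (1/2)·σ²·a²·Y²·∂²_{YY} v̂(t,Y) ] = 0, the supremum being finite. Then the function v(t,U,Y) := (1 − F(t))·U + v̂(t,Y) satisfies the full HJB equation with w(U) = U: for all (t,U,Y) ∈ [0,T] × ℝ × (0,∞), ∂_t v + sup_{a ∈ ℝ, γ ≥ 0} [ e^{−b·t}·u(γ)·∂_U v + ((a·μ + (1−a)·r)·Y − γ·(1−F(t))^C)·∂_Y v + (1/2)·σ²·a²·Y²·∂²_{YY} v + p(t)·U ] = 0. -/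

import Mathlib

noncomputable section

/-- The set over which the supremum is taken in the reduced HJB equation for
von Neumann–Morgenstern preferences `w(x) = x`. -/
def reducedHJBSetVNM (μ r b σ : ℝ) (C : ℕ) (u F : ℝ → ℝ)
    (vhat_Y vhat_YY : ℝ → ℝ → ℝ) (t Y : ℝ) : Set ℝ :=
  {z : ℝ | ∃ a γ : ℝ, 0 ≤ γ ∧ z =
    Real.exp (-(b * t)) * u γ * (1 - F t)
      + ((a * μ + (1 - a) * r) * Y - γ * (1 - F t) ^ C) * vhat_Y t Y
      + 1 / 2 * σ ^ 2 * a ^ 2 * Y ^ 2 * vhat_YY t Y}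

/-- The set over which the supremum is taken in the full HJB equation with
`w(U) = U`. -/
def fullHJBSetVNM (μ r b σ : ℝ) (C : ℕ) (u F p : ℝ → ℝ)
    (v_U v_Y v_YY : ℝ → ℝ → ℝ → ℝ) (t U Y : ℝ) : Set ℝ :=
  {z : ℝ | ∃ a γ : ℝ, 0 ≤ γ ∧ z =
    Real.exp (-(b * t)) * u γ * v_U t U Y
      + ((a * μ + (1 - a) * r) * Y - γ * (1 - F t) ^ C) * v_Y t U Y
      + 1 / 2 * σ ^ 2 * a ^ 2 * Y ^ 2 * v_YY t U Y
      + p t * U}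


lemma sSup_add_const {S : Set ℝ} (hne : S.Nonempty) (hbd : BddAbove S) (c : ℝ) :
    sSup ((fun z => z + c) '' S) = sSup S + c := by
  have hbd' : BddAbove ((fun z => z + c) '' S) :=
    ⟨sSup S + c, by rintro _ ⟨w, hw, rfl⟩; exact add_le_add_left (le_csSup hbd hw) c⟩
  apply le_antisymm
  · apply csSup_le (hne.image _)
    rintro z ⟨w, hw, rfl⟩
    exact add_le_add_left (le_csSup hbd hw) c
  · have h : sSup S ≤ sSup ((fun z => z + c) '' S) - c :=
      csSup_le hne fun w hw => le_sub_iff_add_le.mpr (le_csSup hbd' ⟨w, hw, rfl⟩)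
    linarith

/-- Dimension reduction for the HJB equation with von Neumann–Morgenstern
preferences: if `v̂` solves the reduced HJB equation on `[0,T] × (0,∞)` (with finite
supremum), then `v(t,U,Y) = (1 − F(t))·U + v̂(t,Y)` solves the full HJB equation. -/
theorem stmt_14 (μ r b σ T : ℝ) (hσ : 0 < σ) (hT : 0 < T)
    (C : ℕ) (hC : C = 0 ∨ C = 1)
    (u : ℝ → ℝ)
    (F p : ℝ → ℝ) (hF : ∀ t ∈ Set.Icc 0 T, HasDerivAt F (p t) t)
    (hF1 : ∀ t ∈ Set.Icc 0 T, F t < 1)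
    (vhat vhat_t vhat_Y vhat_YY : ℝ → ℝ → ℝ)
    (hvt : ∀ t Y, HasDerivAt (fun s => vhat s Y) (vhat_t t Y) t)
    (hvY : ∀ t Y, HasDerivAt (fun Z => vhat t Z) (vhat_Y t Y) Y)
    (hvYY : ∀ t Y, HasDerivAt (fun Z => vhat_Y t Z) (vhat_YY t Y) Y)
    (hct : Continuous fun q : ℝ × ℝ => vhat_t q.1 q.2)
    (hcY : Continuous fun q : ℝ × ℝ => vhat_Y q.1 q.2)
    (hcYY : Continuous fun q : ℝ × ℝ => vhat_YY q.1 q.2)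
    (hbdd : ∀ t ∈ Set.Icc 0 T, ∀ Y ∈ Set.Ioi (0:ℝ),
      BddAbove (reducedHJBSetVNM μ r b σ C u F vhat_Y vhat_YY t Y))
    (hHJB : ∀ t ∈ Set.Icc 0 T, ∀ Y ∈ Set.Ioi (0:ℝ),
      vhat_t t Y + sSup (reducedHJBSetVNM μ r b σ C u F vhat_Y vhat_YY t Y) = 0) :
    ∃ v_t v_U v_Y v_YY : ℝ → ℝ → ℝ → ℝ,
      (∀ t U Y, t ∈ Set.Icc 0 T → Y ∈ Set.Ioi (0:ℝ) →
        HasDerivAt (fun s => (1 - F s) * U + vhat s Y) (v_t t U Y) t) ∧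
      (∀ t U Y, t ∈ Set.Icc 0 T → Y ∈ Set.Ioi (0:ℝ) →
        HasDerivAt (fun V => (1 - F t) * V + vhat t Y) (v_U t U Y) U) ∧
      (∀ t U Y, t ∈ Set.Icc 0 T →
        HasDerivAt (fun Z => (1 - F t) * U + vhat t Z) (v_Y t U Y) Y) ∧
      (∀ t U Y, t ∈ Set.Icc 0 T → HasDerivAt (fun Z => v_Y t U Z) (v_YY t U Y) Y) ∧
      ∀ t ∈ Set.Icc 0 T, ∀ U : ℝ, ∀ Y ∈ Set.Ioi (0:ℝ),
        BddAbove (fullHJBSetVNM μ r b σ C u F p v_U v_Y v_YY t U Y) ∧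
        v_t t U Y + sSup (fullHJBSetVNM μ r b σ C u F p v_U v_Y v_YY t U Y) = 0 := by
  refine ⟨fun t U Y => -p t * U + vhat_t t Y, fun t U Y => 1 - F t,
    fun t U Y => vhat_Y t Y, fun t U Y => vhat_YY t Y, ?_, ?_, ?_, ?_, ?_⟩
  · intro t U Y ht hY
    have h1 : HasDerivAt (fun s => (1 - F s) * U) (-p t * U) t := by
      simpa using (((hF t ht).const_sub 1).mul_const U)
    exact h1.add (hvt t Y)
  · intro t U Y ht hY
    simpa using ((hasDerivAt_id U).const_mul (1 - F t)).add_const (vhat t Y)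
  · intro t U Y ht
    exact (hvY t Y).const_add ((1 - F t) * U)
  · intro t U Y ht
    exact hvYY t Y
  · intro t ht U Y hY
    have hset : fullHJBSetVNM μ r b σ C u F p (fun t U Y => 1 - F t)
        (fun t U Y => vhat_Y t Y) (fun t U Y => vhat_YY t Y) t U Y
        = (fun z => z + p t * U) '' reducedHJBSetVNM μ r b σ C u F vhat_Y vhat_YY t Y := by
      ext z
      constructor
      · rintro ⟨a, γ, hγ, rfl⟩
        exact ⟨_, ⟨a, γ, hγ, rfl⟩, rfl⟩
      · rintro ⟨w, ⟨a, γ, hγ, rfl⟩, rfl⟩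
        exact ⟨a, γ, hγ, rfl⟩
    have hne : (reducedHJBSetVNM μ r b σ C u F vhat_Y vhat_YY t Y).Nonempty :=
      ⟨_, 0, 0, le_refl 0, rfl⟩
    have hbd := hbdd t ht Y hY
    constructor
    · rw [hset]
      exact ⟨sSup (reducedHJBSetVNM μ r b σ C u F vhat_Y vhat_YY t Y) + p t * U,
        by rintro _ ⟨w, hw, rfl⟩; exact add_le_add_left (le_csSup hbd hw) _⟩
    · rw [hset, sSup_add_const hne hbd]
      have := hHJB t ht Y hY
      simp only []
      linarith


end
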